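/- (Optimality of the Thanos update.) Let H ∈ ℝ^{b×b} be symmetric positive definite, let w ∈ ℝ^{1×b}, and let 1 ≤ q₁ < ⋯ < q_s ≤ b. With R ∈ ℝ^{s×b} having rows R_{i:} = H⁻¹_{q_i:}, R̂_{ij} = H⁻¹_{q_i q_j}, u = (w_{q₁},…,w_{q_s}), and δ̂ = −u R̂⁻¹ R: for every row vector δ ∈ ℝ^{1×b} satisfying δ_{q_j} = −w_{q_j} for all j ∈ {1,…,s}, one has (1/2) δ H δᵀ ≥ (1/2) δ̂ H δ̂ᵀ, and the minimal value equals S = (1/2) u R̂⁻¹ R H Rᵀ (R̂⁻¹)ᵀ uᵀ. -/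

import Mathlib

open Matrix

lemma posdef_submatrix_inj {n m : Type*} [Fintype n] [Fintype m] [DecidableEq n] [DecidableEq m]
    {M : Matrix n n ℝ} (hM : M.PosDef) (e : m → n) (he : Function.Injective e) :
    (M.submatrix e e).PosDef := by
  set P : Matrix m n ℝ := (1 : Matrix n n ℝ).submatrix e id with hP
  have hPMP : M.submatrix e e = P * M * Pᵀ := by
    ext i j
    simp [hP, Matrix.mul_apply, Matrix.one_apply, Finset.sum_ite_eq, Finset.sum_ite_eq']
  refine Matrix.PosDef.of_dotProduct_mulVec_pos ?_ (fun x hx => ?_)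
  · exact hM.1.submatrix e
  · have hy : ∀ i, Matrix.vecMul x P (e i) = x i := by
      intro i
      simp only [hP, Matrix.vecMul, dotProduct, Matrix.submatrix_apply, id_eq,
        Matrix.one_apply, mul_ite, mul_one, mul_zero]
      rw [Finset.sum_eq_single i]
      · simp
      · intro k _ hk; simp [he.ne hk]
      · simp
    have hyne : Matrix.vecMul x P ≠ 0 := by
      intro h0
      apply hx
      funext i
      have := congrFun h0 (e i)
      rw [hy i] at this
      simpa using this
    have := hM.dotProduct_mulVec_pos hyne
    simp only [star_trivial] at this ⊢
    rw [hPMP]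
    have heq : x ⬝ᵥ (P * M * Pᵀ) *ᵥ x = Matrix.vecMul x P ⬝ᵥ M *ᵥ (Matrix.vecMul x P) :=
      calc x ⬝ᵥ (P * M * Pᵀ) *ᵥ x
        = x ⬝ᵥ P *ᵥ ((M * Pᵀ) *ᵥ x) := by rw [Matrix.mulVec_mulVec, Matrix.mul_assoc]
      _ = Matrix.vecMul x P ⬝ᵥ (M * Pᵀ) *ᵥ x := by rw [Matrix.dotProduct_mulVec]
      _ = Matrix.vecMul x P ⬝ᵥ M *ᵥ (Pᵀ *ᵥ x) := by rw [Matrix.mulVec_mulVec]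
      _ = Matrix.vecMul x P ⬝ᵥ M *ᵥ (Matrix.vecMul x P) := by rw [Matrix.mulVec_transpose]
    rw [heq]; exact this

/-- Optimality of the Thanos update: among all `δ` satisfying the `s` pruning
constraints, `δ̂ = −u R̂⁻¹ R` minimizes `(1/2) δ H δᵀ`, and the minimal value
is `S = (1/2) u R̂⁻¹ R H Rᵀ (R̂⁻¹)ᵀ uᵀ`. -/
theorem thanos_stmt8 (b s : ℕ) (H : Matrix (Fin b) (Fin b) ℝ) (hH : H.PosDef)
    (w : Fin b → ℝ) (q : Fin s → Fin b) (hq : StrictMono q)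
    (R : Matrix (Fin s) (Fin b) ℝ) (hR : R = Matrix.of fun i j => H⁻¹ (q i) j)
    (Rhat : Matrix (Fin s) (Fin s) ℝ)
    (hRhat : Rhat = Matrix.of fun i j => H⁻¹ (q i) (q j))
    (u : Fin s → ℝ) (hu : u = fun i => w (q i))
    (δhat : Fin b → ℝ)
    (hδhat : δhat = -(Matrix.vecMul (Matrix.vecMul u Rhat⁻¹) R)) :
    (∀ δ : Fin b → ℝ, (∀ j : Fin s, δ (q j) = -(w (q j))) →
        (1 / 2 : ℝ) * (δhat ⬝ᵥ H *ᵥ δhat) ≤ (1 / 2 : ℝ) * (δ ⬝ᵥ H *ᵥ δ)) ∧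
      (1 / 2 : ℝ) * (δhat ⬝ᵥ H *ᵥ δhat) =
        (1 / 2 : ℝ) * (u ⬝ᵥ (Rhat⁻¹ * R * H * Rᵀ * (Rhat⁻¹)ᵀ) *ᵥ u) := by
  have hinj : Function.Injective q := hq.injective
  have hHinvPD : (H⁻¹).PosDef := hH.inv
  have hRhatPD : Rhat.PosDef := by
    rw [hRhat]
    exact posdef_submatrix_inj hHinvPD q hinj
  have hRhatdet : IsUnit Rhat.det := hRhatPD.det_pos.ne'.isUnit
  have hHdet : IsUnit H.det := hH.det_pos.ne'.isUnit
  set c : Fin s → ℝ := Matrix.vecMul u Rhat⁻¹ with hc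
  -- R * H = identity submatrix
  have hRH : R * H = (1 : Matrix (Fin b) (Fin b) ℝ).submatrix q id := by
    have h1 : H⁻¹ * H = 1 := Matrix.nonsing_inv_mul H hHdet
    ext i j
    have h2 : (H⁻¹ * H) (q i) j = (1 : Matrix (Fin b) (Fin b) ℝ) (q i) j := by rw [h1]
    show (R * H) i j = (1 : Matrix (Fin b) (Fin b) ℝ) (q i) j
    simpa [hR, Matrix.mul_apply] using h2
  -- constraints satisfied by δhat
  have hcRhat : Matrix.vecMul c Rhat = u := by
    rw [hc, Matrix.vecMul_vecMul, Matrix.nonsing_inv_mul Rhat hRhatdet, Matrix.vecMul_one]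
  have key : ∀ j, Matrix.vecMul c R (q j) = u j := by
    intro j
    have : Matrix.vecMul c R (q j) = Matrix.vecMul c Rhat j := by
      simp [Matrix.vecMul, dotProduct, hR, hRhat]
    rw [this, hcRhat]
  have hδhatq : ∀ j, δhat (q j) = -(w (q j)) := by
    intro j
    rw [hδhat]
    show -(Matrix.vecMul c R) (q j) = _
    simp only [Pi.neg_apply, key j, hu]
  -- for any z, δhat ⬝ᵥ H *ᵥ z = -∑ i, c i * z (q i)
  have hform : ∀ z : Fin b → ℝ, δhat ⬝ᵥ H *ᵥ z = -∑ i, c i * z (q i) := by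
    intro z
    rw [Matrix.dotProduct_mulVec, hδhat]
    show Matrix.vecMul (-(Matrix.vecMul c R)) H ⬝ᵥ z = _
    rw [Matrix.neg_vecMul, Matrix.vecMul_vecMul, hRH, neg_dotProduct, neg_inj]
    simp only [Matrix.vecMul, dotProduct, Matrix.submatrix_apply, id_eq,
      Matrix.one_apply, mul_ite, mul_one, mul_zero, Finset.sum_mul, ite_mul, zero_mul]
    rw [Finset.sum_comm]
    simp
  constructor
  · intro δ hδ
    have hsym : Hᵀ = H := hH.1
    set d : Fin b → ℝ := δ - δhat with hd
    have hdq : ∀ j, d (q j) = 0 := by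
      intro j; simp [hd, hδ j, hδhatq j]
    have hcross : δhat ⬝ᵥ H *ᵥ d = 0 := by
      rw [hform d]
      simp [hdq]
    have hsymm : ∀ x y : Fin b → ℝ, x ⬝ᵥ H *ᵥ y = y ⬝ᵥ H *ᵥ x := by
      intro x y
      rw [Matrix.dotProduct_mulVec, dotProduct_comm, ← Matrix.mulVec_transpose, hsym]
    have hcross' : d ⬝ᵥ H *ᵥ δhat = 0 := (hsymm d δhat).trans hcross
    have hdd : 0 ≤ d ⬝ᵥ H *ᵥ d := by
      have := hH.posSemidef.dotProduct_mulVec_nonneg d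
      simpa using this
    have hexpand : δ ⬝ᵥ H *ᵥ δ = δhat ⬝ᵥ H *ᵥ δhat + d ⬝ᵥ H *ᵥ d := by
      have hδ' : δ = δhat + d := by simp [hd]
      rw [hδ']
      simp only [Matrix.mulVec_add, add_dotProduct, dotProduct_add]
      rw [hcross, hcross']
      ring
    rw [hexpand]
    nlinarith
  · have lhs : δhat ⬝ᵥ H *ᵥ δhat
        = Matrix.vecMul c (R * H) ⬝ᵥ Matrix.vecMul c R := by
      rw [hδhat]
      show (-(Matrix.vecMul c R)) ⬝ᵥ H *ᵥ (-(Matrix.vecMul c R)) = _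
      rw [Matrix.mulVec_neg, neg_dotProduct, dotProduct_neg, neg_neg,
        Matrix.dotProduct_mulVec, Matrix.vecMul_vecMul]
    have rhs : u ⬝ᵥ (Rhat⁻¹ * R * H * Rᵀ * (Rhat⁻¹)ᵀ) *ᵥ u
        = Matrix.vecMul c (R * H) ⬝ᵥ Matrix.vecMul c R := by
      rw [Matrix.dotProduct_mulVec]
      have h3 : Matrix.vecMul u (Rhat⁻¹ * R * H * Rᵀ * (Rhat⁻¹)ᵀ)
          = Matrix.vecMul (Matrix.vecMul c (R * H)) (Rᵀ * (Rhat⁻¹)ᵀ) := by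
        rw [← Matrix.vecMul_vecMul, ← Matrix.vecMul_vecMul, ← Matrix.vecMul_vecMul,
          ← Matrix.vecMul_vecMul, ← hc, Matrix.vecMul_vecMul (M := R) (N := H),
          Matrix.vecMul_vecMul]
      rw [h3]
      have h4 : Rᵀ * (Rhat⁻¹)ᵀ = (Rhat⁻¹ * R)ᵀ := (Matrix.transpose_mul _ _).symm
      rw [h4, Matrix.vecMul_transpose, dotProduct_comm, Matrix.dotProduct_mulVec]
      simp only [← Matrix.vecMul_vecMul, ← hc]
      exact dotProduct_comm _ _
    rw [lhs, rhs]
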